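/- Let N ≥ 1 and suppose a_1, ..., a_J ∈ ℝ, b_1, ..., b_J ∈ ℝ with the pairs (b_j, q_j) pairwise distinct, and q_j ∈ ℕ. If the function f(ρ) = Σ_{j=1}^J a_j ρ^{i b_j} (log ρ)^{q_j} (defined for ρ ∈ (0,1)) tends to 0 as ρ → 0⁺ together with all iterates of ρ ∂_ρ applied to f, then a_j = 0 for all j. -/

import Mathlib

open Filter

/-- The operator `ρ ∂_ρ` acting on complex-valued functions of a real variable. -/
noncomputable def rhoD (f : ℝ → ℂ) : ℝ → ℂ := fun ρ => (ρ : ℂ) * deriv f ρ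

namespace LinIndAux

open Polynomial Complex

noncomputable def Efun (β : ℝ) (P : ℂ[X]) : ℝ → ℂ :=
  fun t => Complex.exp (Complex.I * β * t) * P.eval (t : ℂ)

lemma Efun_zero (β : ℝ) (t : ℝ) : Efun β 0 t = 0 := by simp [Efun]

lemma hasDerivAt_Efun (β : ℝ) (P : ℂ[X]) (t : ℝ) :
    HasDerivAt (Efun β P)
      (Efun β (Polynomial.C (Complex.I * β) * P + derivative P) t) t := by
  have h1 : HasDerivAt (fun t : ℝ => (t : ℂ)) 1 t := by
    simpa using (hasDerivAt_id t).ofReal_comp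
  have he : HasDerivAt (fun t : ℝ => Complex.exp (Complex.I * β * t))
      (Complex.exp (Complex.I * β * t) * (Complex.I * β)) t := by
    simpa using ((h1.const_mul (Complex.I * β)).cexp)
  have hp : HasDerivAt (fun t : ℝ => P.eval (t : ℂ)) (eval (t : ℂ) (derivative P)) t := by
    exact (P.hasDerivAt ((t : ℂ))).comp_ofReal
  have := he.mul hp
  convert this using 1
  · rfl
  · rfl
  simp only [Efun, eval_add, eval_mul, eval_C]
  ring

noncomputable def gfun (S : Finset ℝ) (P : ℝ → ℂ[X]) : ℝ → ℂ :=
  fun t => ∑ γ ∈ S, Efun γ (P γ) t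

noncomputable def Dop (P : ℝ → ℂ[X]) : ℝ → ℂ[X] :=
  fun γ => Polynomial.C (Complex.I * γ) * P γ + derivative (P γ)

lemma hasDerivAt_gfun (S : Finset ℝ) (P : ℝ → ℂ[X]) (t : ℝ) :
    HasDerivAt (gfun S P) (gfun S (Dop P) t) t := by
  have : HasDerivAt (fun t => ∑ γ ∈ S, Efun γ (P γ) t)
      (∑ γ ∈ S, Efun γ (Dop P γ) t) t :=
    HasDerivAt.fun_sum fun γ _ => hasDerivAt_Efun γ (P γ) t
  exact this

lemma deriv_gfun (S : Finset ℝ) (P : ℝ → ℂ[X]) :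
    deriv (gfun S P) = gfun S (Dop P) :=
  funext fun t => (hasDerivAt_gfun S P t).deriv

lemma iterate_deriv_gfun (S : Finset ℝ) (k : ℕ) (P : ℝ → ℂ[X]) :
    deriv^[k] (gfun S P) = gfun S (Dop^[k] P) := by
  induction k generalizing P with
  | zero => rfl
  | succ k ih =>
    rw [Function.iterate_succ_apply, Function.iterate_succ_apply, deriv_gfun, ih]

noncomputable def Top (β : ℝ) (P : ℝ → ℂ[X]) : ℝ → ℂ[X] :=
  fun γ => derivative (P γ) + Polynomial.C (Complex.I * γ - Complex.I * β) * P γ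

lemma Dop_Top_comm (β : ℝ) (P : ℝ → ℂ[X]) : Dop (Top β P) = Top β (Dop P) := by
  funext γ
  simp only [Dop, Top, derivative_add, derivative_C_mul, derivative_mul, derivative_C,
    zero_mul, zero_add, map_sub, map_mul]
  ring

lemma Dop_iterate_Top_comm (β : ℝ) (P : ℝ → ℂ[X]) (k : ℕ) :
    Dop^[k] (Top β P) = Top β (Dop^[k] P) := by
  induction k generalizing P with
  | zero => rfl
  | succ k ih =>
    rw [Function.iterate_succ_apply, Function.iterate_succ_apply, Dop_Top_comm, ih]

lemma gfun_Top (β : ℝ) (S : Finset ℝ) (P : ℝ → ℂ[X]) (t : ℝ) :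
    gfun S (Top β P) t = gfun S (Dop P) t - (Complex.I * β) * gfun S P t := by
  simp only [gfun, Finset.mul_sum, ← Finset.sum_sub_distrib]
  apply Finset.sum_congr rfl
  intro γ _
  simp only [Efun, Top, Dop, eval_add, eval_mul, eval_C, eval_sub, map_sub, map_mul]
  ring

lemma OK_Top (β : ℝ) (S : Finset ℝ) (P : ℝ → ℂ[X])
    (h : ∀ k, Tendsto (gfun S (Dop^[k] P)) atBot (nhds 0)) :
    ∀ k, Tendsto (gfun S (Dop^[k] (Top β P))) atBot (nhds 0) := by
  intro k
  rw [Dop_iterate_Top_comm]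
  have h1 := (h (k + 1)).sub ((h k).const_mul (Complex.I * β))
  simp only [mul_zero, sub_zero] at h1
  apply h1.congr
  intro t
  rw [Function.iterate_succ_apply']
  exact (gfun_Top β S (Dop^[k] P) t).symm

lemma Top_iterate_apply_self (β : ℝ) (P : ℝ → ℂ[X]) (N : ℕ) :
    ((Top β)^[N] P) β = derivative^[N] (P β) := by
  induction N generalizing P with
  | zero => rfl
  | succ N ih =>
    rw [Function.iterate_succ_apply, Function.iterate_succ_apply, ih]
    congr 1
    simp [Top]

lemma Top_iterate_apply (β γ : ℝ) (P : ℝ → ℂ[X]) (N : ℕ) :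
    ((Top β)^[N] P) γ =
      (fun p => derivative p + Polynomial.C (Complex.I * γ - Complex.I * β) * p)^[N] (P γ) := by
  induction N generalizing P with
  | zero => rfl
  | succ N ih =>
    rw [Function.iterate_succ_apply, Function.iterate_succ_apply, ih]
    rfl

lemma Dop_iterate_apply_zero (β : ℝ) (P : ℝ → ℂ[X]) (h : P β = 0) (k : ℕ) :
    (Dop^[k] P) β = 0 := by
  induction k generalizing P with
  | zero => exact h
  | succ k ih =>
    rw [Function.iterate_succ_apply]
    exact ih (Dop P) (by simp [Dop, h])

lemma poly_inj {c : ℂ} (hc : c ≠ 0) {p : ℂ[X]}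
    (h : derivative p + Polynomial.C c * p = 0) : p = 0 := by
  by_contra hp
  rcases eq_or_ne p.natDegree 0 with h0 | h0
  · obtain ⟨x, hx⟩ := Polynomial.natDegree_eq_zero.1 h0
    rw [← hx] at h hp
    simp only [derivative_C, zero_add, ← Polynomial.C_mul] at h
    have := Polynomial.C_eq_zero.1 h
    rcases mul_eq_zero.1 this with h' | h'
    · exact hc h'
    · exact hp (by rw [h', map_zero])
  · have h1 : (Polynomial.C c * p).natDegree = p.natDegree :=
      Polynomial.natDegree_C_mul hc
    have h2 := Polynomial.natDegree_derivative_lt h0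
    have h3 : derivative p = -(Polynomial.C c * p) := eq_neg_of_add_eq_zero_left h
    rw [h3, natDegree_neg, h1] at h2
    omega

lemma poly_iter_inj {c : ℂ} (hc : c ≠ 0) (N : ℕ) {p : ℂ[X]}
    (h : (fun p => derivative p + Polynomial.C c * p)^[N] p = 0) : p = 0 := by
  induction N generalizing p with
  | zero => exact h
  | succ N ih =>
    rw [Function.iterate_succ_apply] at h
    exact poly_inj hc (ih h)

lemma OK_Top_iter (β : ℝ) (S : Finset ℝ) (N : ℕ) : ∀ P : ℝ → ℂ[X],
    (∀ k, Tendsto (gfun S (Dop^[k] P)) atBot (nhds 0)) →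
    ∀ k, Tendsto (gfun S (Dop^[k] ((Top β)^[N] P))) atBot (nhds 0) := by
  induction N with
  | zero => exact fun P hP => hP
  | succ N ih =>
    intro P hP
    rw [Function.iterate_succ]
    exact ih (Top β P) (OK_Top β S P hP)

lemma poly_zero_of_tendsto {p : ℂ[X]}
    (h : Tendsto (fun t : ℝ => ‖p.eval ((t : ℂ))‖) atBot (nhds 0)) : p = 0 := by
  by_contra hp
  rcases lt_or_ge 0 p.degree with hd | hd
  · have hz : Tendsto (fun t : ℝ => ‖((t : ℝ) : ℂ)‖) atBot atTop := by
      simp only [Complex.norm_real, Real.norm_eq_abs]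
      exact tendsto_abs_atBot_atTop
    have h2 := p.tendsto_norm_atTop hd hz
    exact not_tendsto_nhds_of_tendsto_atTop h2 0 h
  · have hx : p = Polynomial.C (p.coeff 0) := Polynomial.eq_C_of_degree_le_zero hd
    rw [hx] at h hp
    simp only [Polynomial.eval_C] at h
    have h0 : ‖p.coeff 0‖ = 0 := tendsto_nhds_unique tendsto_const_nhds h
    exact hp (by rw [norm_eq_zero.1 h0, map_zero])

lemma norm_Efun (β : ℝ) (P : ℂ[X]) (t : ℝ) :
    ‖Efun β P t‖ = ‖P.eval ((t : ℂ))‖ := by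
  rw [Efun, norm_mul]
  have : ‖Complex.exp (Complex.I * β * t)‖ = 1 := by
    rw [Complex.norm_exp]
    simp [Complex.mul_re]
  rw [this, one_mul]

lemma core (n : ℕ) : ∀ (S : Finset ℝ), S.card = n → ∀ (P : ℝ → ℂ[X]),
    (∀ k, Tendsto (gfun S (Dop^[k] P)) atBot (nhds 0)) → ∀ γ ∈ S, P γ = 0 := by
  induction n with
  | zero =>
    intro S hS P _ γ hγ
    rw [Finset.card_eq_zero] at hS
    simp [hS] at hγ
  | succ n ih =>
    intro S hS P hP β hβ
    set N := (P β).natDegree + 1 with hN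
    set Q := (Top β)^[N] P with hQdef
    have hQ : ∀ k, Tendsto (gfun S (Dop^[k] Q)) atBot (nhds 0) :=
      OK_Top_iter β S N P hP
    have hQβ : Q β = 0 := by
      rw [hQdef, Top_iterate_apply_self]
      exact Polynomial.iterate_derivative_eq_zero (Nat.lt_succ_self _)
    have hQerase : ∀ k, Tendsto (gfun (S.erase β) (Dop^[k] Q)) atBot (nhds 0) := by
      intro k
      have heq : ∀ t, gfun (S.erase β) (Dop^[k] Q) t = gfun S (Dop^[k] Q) t := by
        intro t
        apply Finset.sum_erase
        rw [Dop_iterate_apply_zero β Q hQβ k, Efun_zero]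
      exact (hQ k).congr fun t => (heq t).symm
    have hcard : (S.erase β).card = n := by
      rw [Finset.card_erase_of_mem hβ, hS]
      rfl
    have hQ0 := ih (S.erase β) hcard Q hQerase
    have hPγ : ∀ γ ∈ S, γ ≠ β → P γ = 0 := by
      intro γ hγ hne
      have hz : Q γ = 0 := hQ0 γ (Finset.mem_erase.2 ⟨hne, hγ⟩)
      rw [hQdef, Top_iterate_apply] at hz
      have hc : Complex.I * γ - Complex.I * β ≠ 0 := by
        intro hcc
        apply hne
        have : (Complex.I : ℂ) * (γ - β) = 0 := by rw [mul_sub]; exact hcc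
        rcases mul_eq_zero.1 this with h' | h'
        · exact absurd h' Complex.I_ne_zero
        · have : (γ : ℂ) = β := by linear_combination h'
          exact_mod_cast this
      exact poly_iter_inj hc N hz
    -- now show P β = 0 using the k = 0 limit
    have h0 := hP 0
    simp only [Function.iterate_zero, id] at h0
    have heq : ∀ t, gfun S P t = Efun β (P β) t := by
      intro t
      rw [gfun, Finset.sum_eq_single β]
      · intro γ hγ hne
        rw [hPγ γ hγ hne, Efun_zero]
      · intro h
        exact absurd hβ h
    have hnorm : Tendsto (fun t : ℝ => ‖(P β).eval ((t : ℂ))‖) atBot (nhds 0) := by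
      have := (h0.congr heq).norm
      rw [norm_zero] at this
      exact this.congr fun t => norm_Efun β (P β) t
    exact poly_zero_of_tendsto hnorm

end LinIndAux

open LinIndAux Polynomial Complex in
theorem stmt0 (J : ℕ) (hJ : 1 ≤ J) (a b : Fin J → ℝ) (q : Fin J → ℕ)
    (hdist : Function.Injective (fun j : Fin J => (b j, q j)))
    (f : ℝ → ℂ)
    (hf : ∀ ρ : ℝ, 0 < ρ → ρ < 1 →
      f ρ = ∑ j, (a j : ℂ) * Complex.exp (Complex.I * (b j) * Real.log ρ) *
        ((Real.log ρ : ℂ)) ^ (q j))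
    (hlim : ∀ k : ℕ, Tendsto (rhoD^[k] f) (nhdsWithin 0 (Set.Ioi 0)) (nhds 0)) :
    ∀ j, a j = 0 := by
  classical
  set S : Finset ℝ := Finset.image b Finset.univ with hS
  set P : ℝ → ℂ[X] := fun γ =>
    ∑ j ∈ Finset.univ.filter (fun j => b j = γ),
      Polynomial.C ((a j : ℂ)) * Polynomial.X ^ (q j) with hPdef
  have hg : ∀ t : ℝ,
      gfun S P t = ∑ j, (a j : ℂ) * Complex.exp (Complex.I * (b j) * t) * ((t : ℂ)) ^ (q j) := by
    intro t
    rw [← Finset.sum_fiberwise_of_maps_to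
      (g := b) (t := S) (fun j _ => Finset.mem_image_of_mem b (Finset.mem_univ j))
      (fun j => (a j : ℂ) * Complex.exp (Complex.I * (b j) * t) * ((t : ℂ)) ^ (q j))]
    apply Finset.sum_congr rfl
    intro γ _
    rw [Efun, hPdef]
    rw [Polynomial.eval_finset_sum, Finset.mul_sum]
    apply Finset.sum_congr rfl
    intro j hj
    have hbj : b j = γ := (Finset.mem_filter.1 hj).2
    simp only [eval_mul, eval_C, eval_pow, eval_X, hbj]
    ring
  have key : ∀ k, ∀ ρ : ℝ, 0 < ρ → ρ < 1 →
      rhoD^[k] f ρ = gfun S (Dop^[k] P) (Real.log ρ) := by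
    intro k
    induction k with
    | zero =>
      intro ρ h0 h1
      simpa [hg] using hf ρ h0 h1
    | succ k ih =>
      intro ρ h0 h1
      rw [Function.iterate_succ_apply']
      show (ρ : ℂ) * deriv (rhoD^[k] f) ρ = _
      have hev : deriv (rhoD^[k] f) ρ =
          deriv (fun x => gfun S (Dop^[k] P) (Real.log x)) ρ := by
        apply Filter.EventuallyEq.deriv_eq
        filter_upwards [Ioo_mem_nhds h0 h1] with x hx using ih x hx.1 hx.2
      have hcomp : HasDerivAt (fun x : ℝ => gfun S (Dop^[k] P) (Real.log x))
          (ρ⁻¹ • gfun S (Dop^[k + 1] P) (Real.log ρ)) ρ := by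
        have h2 := hasDerivAt_gfun S (Dop^[k] P) (Real.log ρ)
        have h3 := Real.hasDerivAt_log (ne_of_gt h0)
        have h4 := h2.scomp ρ h3
        rw [Function.iterate_succ_apply']
        exact h4
      rw [hev, hcomp.deriv, Complex.real_smul, Complex.ofReal_inv, ← mul_assoc,
        mul_inv_cancel₀ (by exact_mod_cast ne_of_gt h0), one_mul]
  have hlim' : ∀ k, Tendsto (gfun S (Dop^[k] P)) atBot (nhds 0) := by
    intro k
    have h1 : Tendsto (fun t => rhoD^[k] f (Real.exp t)) atBot (nhds 0) :=
      (hlim k).comp Real.tendsto_exp_atBot_nhdsGT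
    apply h1.congr'
    filter_upwards [eventually_lt_atBot (0 : ℝ)] with t ht
    rw [key k (Real.exp t) (Real.exp_pos t) (Real.exp_lt_one_iff.2 ht), Real.log_exp]
  have hP0 := core S.card S rfl P hlim'
  intro j
  have hPbj : P (b j) = 0 := hP0 (b j) (Finset.mem_image_of_mem b (Finset.mem_univ j))
  have hco : (P (b j)).coeff (q j) = (a j : ℂ) := by
    rw [hPdef]
    rw [Polynomial.finset_sum_coeff]
    have hjmem : j ∈ Finset.univ.filter (fun j' => b j' = b j) :=
      Finset.mem_filter.2 ⟨Finset.mem_univ j, rfl⟩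
    rw [Finset.sum_eq_single_of_mem j hjmem]
    · simp [Polynomial.coeff_C_mul, Polynomial.coeff_X_pow]
    · intro j' hj' hne
      have hb : b j' = b j := (Finset.mem_filter.1 hj').2
      have hq : q j' ≠ q j := by
        intro hqq
        exact hne (hdist (by simp [hb, hqq] : (b j', q j') = (b j, q j)))
      simp [Polynomial.coeff_C_mul, Polynomial.coeff_X_pow, Ne.symm hq]
  rw [hPbj] at hco
  simp only [Polynomial.coeff_zero] at hco
  exact_mod_cast hco.symm
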